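/- Let F_4 = F_2(w) with w² + w + 1 = 0, and let B = F_4[x,y]/(y² + y + x³ + w). For every integer n ≥ 1, writing X = x^{4^n} and Y = y^{4^n} in B, one has ((X+x)(Y⁴+y⁴) + (X⁴+x⁴)(x²X + x³ + 1) + X + x)·(X^{16} + x) = ((Y⁴+y)(X⁴+X) + X^{13} + xX^{12} + xX⁹ + x)·(x²X⁸ + (X⁴+x)(Y⁴+y) + X⁴) in B. (This is the identity, after clearing denominators, proving case (iii) of the Lara Rodríguez–Thakur conjecture: the conjectured formula for the ratio α_{n,1} = ζ_A(q^n−1, q^{n+1}−q^n)/ζ_A(q^{n+1}−1) agrees with the shtuka-theoretic formula.) -/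

import Mathlib

/-!
`F₄ = F₂(w)` with `w² + w + 1 = 0` is formalised as an arbitrary field `F` with
`4` elements together with an element `w` satisfying `w² + w + 1 = 0`.
`B = F₄[x,y]/(y² + y + x³ + w)` is realised as the quotient of the bivariate
polynomial ring `Polynomial (Polynomial F)` (inner variable `x`, outer variable
`y`) by the ideal generated by the defining relation.
-/

open Polynomial

/-- The coordinate ring `B = F₄[x,y]/(y² + y + x³ + w)`. -/
abbrev Bthree (F : Type) [Field F] (w : F) : Type :=
  Polynomial (Polynomial F) ⧸
    Ideal.span {(Polynomial.X ^ 2 + Polynomial.X +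
      Polynomial.C (Polynomial.X ^ 3 + Polynomial.C w) : Polynomial (Polynomial F))}

/-- The image `x` of the inner variable in `B`. -/
noncomputable def xB (F : Type) [Field F] (w : F) : Bthree F w :=
  Ideal.Quotient.mk _ (Polynomial.C Polynomial.X)

/-- The image `y` of the outer variable in `B`. -/
noncomputable def yB (F : Type) [Field F] (w : F) : Bthree F w :=
  Ideal.Quotient.mk _ Polynomial.X

/-- The natural ring homomorphism `F → B`. -/
noncomputable def phiB (F : Type) [Field F] (w : F) : F →+* Bthree F w :=
  (Ideal.Quotient.mk _).comp (Polynomial.C.comp Polynomial.C)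

set_option maxHeartbeats 2000000 in
/-- Auxiliary abstract version: the identity holds in any commutative ring of
characteristic `2` containing elements `wb, xb, yb` with `wb² + wb + 1 = 0` and
`yb² + yb + xb³ + wb = 0`. -/
theorem statement18_aux {R : Type} [CommRing R] (xb yb wb : R)
    (h2 : (2 : R) = 0) (hwb : wb ^ 2 + wb + 1 = 0)
    (hy : yb ^ 2 + yb + xb ^ 3 + wb = 0) (n : ℕ)
    (X Y : R) (hXd : X = xb ^ 4 ^ n) (hYd : Y = yb ^ 4 ^ n) :
    ((X + xb) * (Y ^ 4 + yb ^ 4) +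
          (X ^ 4 + xb ^ 4) * (xb ^ 2 * X + xb ^ 3 + 1) + X + xb) *
        (X ^ 16 + xb) =
      ((Y ^ 4 + yb) * (X ^ 4 + X) + X ^ 13 + xb * X ^ 12 + xb * X ^ 9 + xb) *
        (xb ^ 2 * X ^ 8 + (X ^ 4 + xb) * (Y ^ 4 + yb) + X ^ 4) := by
  have key : ∀ p q r s : R, p + q + r + s = 0 → p ^ 2 + q ^ 2 + r ^ 2 + s ^ 2 = 0 := by
    intro p q r s h
    linear_combination (p + q + r + s) * h - (p*q + p*r + p*s + q*r + q*s + r*s) * h2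
  have hw4 : wb ^ 4 = wb := by linear_combination (wb ^ 2 - wb) * hwb
  have relY : ∀ m : ℕ, (yb ^ 4 ^ m) ^ 2 + yb ^ 4 ^ m + (xb ^ 4 ^ m) ^ 3 + wb = 0 := by
    intro m
    induction m with
    | zero => simpa using hy
    | succ k ih =>
      have e1 := key _ _ _ _ ih
      have e2 := key _ _ _ _ e1
      have hxp : xb ^ 4 ^ (k + 1) = (xb ^ 4 ^ k) ^ 4 := by
        rw [← pow_mul, ← pow_succ]
      have hyp : yb ^ 4 ^ (k + 1) = (yb ^ 4 ^ k) ^ 4 := by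
        rw [← pow_mul, ← pow_succ]
      rw [hxp, hyp]
      linear_combination e2 - hw4
  have hYrel : Y ^ 2 + Y + X ^ 3 + wb = 0 := by
    rw [hXd, hYd]; exact relY n
  linear_combination
    (6 * X ^ 5 + 4 * X ^ 5 * wb + -6 * X ^ 5 * Y + -9 * X ^ 5 * Y * wb + -4 * X ^ 8 + -11 * X ^ 8 * wb + -4 * X ^ 8 * Y + 7 * X ^ 8 * Y * wb + -10 * X ^ 11 + -3 * X ^ 11 * wb + 7 * X ^ 11 * Y + 10 * X ^ 11 * Y * wb + 3 * X ^ 14 + 10 * X ^ 14 * wb + 3 * X ^ 14 * Y + -6 * X ^ 14 * Y * wb + 2 * X ^ 17 + -3 * X ^ 17 * wb + -2 * X ^ 17 * Y + yb * X ^ 5 + 2 * yb * X ^ 5 * wb + yb * X ^ 5 * Y + -2 * yb * X ^ 5 * Y * wb + 2 * yb * X ^ 8 + -1 * yb * X ^ 8 * Y + -2 * yb * X ^ 8 * Y * wb + -2 * yb * X ^ 11 * wb + -2 * yb * X ^ 11 * Y + -1 * yb * X ^ 14 + -1 * yb * X ^ 17 + yb * X ^ 17 * wb + 5 * xb * X +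 xb * X * wb + -7 * xb * X * Y + -7 * xb * X * Y * wb + -5 * xb * X ^ 4 + -9 * xb * X ^ 4 * wb + -2 * xb * X ^ 4 * Y + 7 * xb * X ^ 4 * Y * wb + -9 * xb * X ^ 7 + -3 * xb * X ^ 7 * wb + 7 * xb * X ^ 7 * Y + 10 * xb * X ^ 7 * Y * wb + 3 * xb * X ^ 10 + 10 * xb * X ^ 10 * wb + 3 * xb * X ^ 10 * Y + -6 * xb * X ^ 10 * Y * wb + 3 * xb * X ^ 13 + -1 * xb * X ^ 13 * Y + -2 * xb * X ^ 13 * Y * wb + -3 * xb * X ^ 16 * wb + -2 * xb * X ^ 16 * Y + -1 * xb * X ^ 19 + xb * yb * X + 3 * xb * yb * X * wb + xb * yb * X * Y + -2 * xb * yb * X * Y * wb + 2 * xb * yb * X ^ 4 + -1 * xb * yb * X ^ 4 * Y + -2 * xb * yb * X ^ 4 * Y * wb + -2 * xb * yb * X ^ 7 * wb + -2 * xb * yb * X ^ 7 * Y + -1 * xb * yb * X ^ 10 + -1 * xb * yb * X ^ 13 + -1 * xb * yb * X ^ 16 + xb * yb * X ^ 16 * wb + -1 * xb ^ 2 * wb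 + xb ^ 2 * X ^ 9 + 2 * xb ^ 2 * X ^ 9 * wb + xb ^ 2 * X ^ 9 * Y + -2 * xb ^ 2 * X ^ 9 * Y * wb + 2 * xb ^ 2 * X ^ 12 + -1 * xb ^ 2 * X ^ 12 * Y + -2 * xb ^ 2 * X ^ 12 * Y * wb + -2 * xb ^ 2 * X ^ 15 * wb + -2 * xb ^ 2 * X ^ 15 * Y + -1 * xb ^ 2 * X ^ 18 + -1 * xb ^ 2 * yb + xb ^ 2 * yb * wb + -1 * xb ^ 2 * yb * X ^ 9 + -1 * xb ^ 2 * yb * X ^ 12 + xb ^ 3 * X ^ 5 + -1 * xb ^ 3 * X ^ 17 + xb ^ 3 * X ^ 17 * wb + xb ^ 3 * yb * X ^ 17 + xb ^ 4 * X * wb + xb ^ 4 * X ^ 4 + xb ^ 4 * X ^ 16 * wb + xb ^ 4 * yb * X + xb ^ 4 * yb * X ^ 16 + xb ^ 5 * wb + xb ^ 5 * yb + xb ^ 6 * X ^ 17 + xb ^ 7 * X + xb ^ 7 * X ^ 16 + xb ^ 8) * h2 +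
    (-1 * X ^ 5 + -1 * X ^ 8 + X ^ 17 + -1 * X ^ 17 * wb + -1 * yb * X ^ 17 + yb ^ 2 * X ^ 17 + -1 * xb * X * wb + -1 * xb * X ^ 4 + xb * X ^ 16 + -1 * xb * X ^ 16 * wb + -1 * xb * yb * X + -1 * xb * yb * X ^ 16 + xb * yb ^ 2 * X + xb * yb ^ 2 * X ^ 16 + xb ^ 2 + -1 * xb ^ 2 * wb + -1 * xb ^ 2 * yb + xb ^ 2 * yb ^ 2 + -1 * xb ^ 3 * X ^ 17 + -1 * xb ^ 4 * X + -1 * xb ^ 4 * X ^ 16 + -1 * xb ^ 5) * hy +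
    (-2 * X ^ 5 + 6 * X ^ 5 * wb + -6 * X ^ 5 * wb ^ 2 + X ^ 5 * wb ^ 3 + 2 * X ^ 5 * Y + -4 * X ^ 5 * Y * wb + 3 * X ^ 5 * Y * wb ^ 2 + -2 * X ^ 5 * Y ^ 2 + 3 * X ^ 5 * Y ^ 2 * wb + -1 * X ^ 5 * Y ^ 2 * wb ^ 2 + X ^ 5 * Y ^ 3 + -2 * X ^ 5 * Y ^ 3 * wb + -1 * X ^ 5 * Y ^ 4 + X ^ 5 * Y ^ 4 * wb + X ^ 5 * Y ^ 5 + -1 * X ^ 5 * Y ^ 6 + 4 * X ^ 8 + -6 * X ^ 8 * wb + -3 * X ^ 8 * wb ^ 2 + X ^ 8 * wb ^ 3 + -2 * X ^ 8 * Y + 2 * X ^ 8 * Y * wb + 3 * X ^ 8 * Y * wb ^ 2 + X ^ 8 * Y ^ 2 + X ^ 8 * Y ^ 2 * wb + -1 * X ^ 8 * Y ^ 2 * wb ^ 2 + -1 * X ^ 8 * Y ^ 3 + -2 * X ^ 8 * Y ^ 3 * wb + X ^ 8 * Y ^ 4 * wb + X ^ 8 * Y ^ 5 + -1 * X ^ 8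 * Y ^ 6 + -9 * X ^ 11 * wb + 3 * X ^ 11 * wb ^ 2 + -1 * X ^ 11 * Y + 6 * X ^ 11 * Y * wb + 2 * X ^ 11 * Y ^ 2 + -2 * X ^ 11 * Y ^ 2 * wb + -2 * X ^ 11 * Y ^ 3 + X ^ 11 * Y ^ 4 + -5 * X ^ 14 + 3 * X ^ 14 * wb + 3 * X ^ 14 * Y + -1 * X ^ 14 * Y ^ 2 + X ^ 17 + -2 * yb * X ^ 5 + 2 * yb * X ^ 5 * wb + 2 * yb * X ^ 5 * Y + -2 * yb * X ^ 5 * Y ^ 2 + 2 * yb * X ^ 8 * wb + 2 * yb * X ^ 8 * Y + -2 * yb * X ^ 8 * Y ^ 2 + 2 * yb * X ^ 11 + 4 * xb * X * wb + -6 * xb * X * wb ^ 2 + xb * X * wb ^ 3 + -4 * xb * X * Y * wb + 3 * xb * X * Y * wb ^ 2 + 3 * xb * X * Y ^ 2 * wb + -1 * xb * X * Y ^ 2 * wb ^ 2 + xb * X * Y ^ 3 + -2 * xb * X * Y ^ 3 * wb + -1 * xb * X * Y ^ 4 + xb * X * Y ^ 4 * wb + xb * X * Y ^ 5 + -1 *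 xb * X * Y ^ 6 + 2 * xb * X ^ 4 + -6 * xb * X ^ 4 * wb + -3 * xb * X ^ 4 * wb ^ 2 + xb * X ^ 4 * wb ^ 3 + -2 * xb * X ^ 4 * Y + 2 * xb * X ^ 4 * Y * wb + 3 * xb * X ^ 4 * Y * wb ^ 2 + xb * X ^ 4 * Y ^ 2 + xb * X ^ 4 * Y ^ 2 * wb + -1 * xb * X ^ 4 * Y ^ 2 * wb ^ 2 + -1 * xb * X ^ 4 * Y ^ 3 + -2 * xb * X ^ 4 * Y ^ 3 * wb + xb * X ^ 4 * Y ^ 4 * wb + xb * X ^ 4 * Y ^ 5 + -1 * xb * X ^ 4 * Y ^ 6 + -9 * xb * X ^ 7 * wb + 3 * xb * X ^ 7 * wb ^ 2 + -1 * xb * X ^ 7 * Y + 6 * xb * X ^ 7 * Y * wb + 2 * xb * X ^ 7 * Y ^ 2 + -2 * xb * X ^ 7 * Y ^ 2 * wb + -2 * xb * X ^ 7 * Y ^ 3 + xb * X ^ 7 * Y ^ 4 + -5 * xb * X ^ 10 + 3 * xb * X ^ 10 * wb + 3 * xb * X ^ 10 * Y + -1 * xb * X ^ 10 * Y ^ 2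 + -1 * xb * X ^ 13 + 2 * xb * X ^ 13 * wb + 2 * xb * X ^ 13 * Y + -2 * xb * X ^ 13 * Y ^ 2 + 2 * xb * X ^ 16 + -2 * xb * yb * X + 2 * xb * yb * X * wb + 2 * xb * yb * X * Y + -2 * xb * yb * X * Y ^ 2 + 2 * xb * yb * X ^ 4 * wb + 2 * xb * yb * X ^ 4 * Y + -2 * xb * yb * X ^ 4 * Y ^ 2 + 2 * xb * yb * X ^ 7 + -2 * xb ^ 2 * X ^ 9 + 2 * xb ^ 2 * X ^ 9 * wb + 2 * xb ^ 2 * X ^ 9 * Y + -2 * xb ^ 2 * X ^ 9 * Y ^ 2 + 2 * xb ^ 2 * X ^ 12 * wb + 2 * xb ^ 2 * X ^ 12 * Y + -2 * xb ^ 2 * X ^ 12 * Y ^ 2 + 2 * xb ^ 2 * X ^ 15) * hYrel +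
    (-12 * X ^ 5 + 7 * X ^ 5 * wb + -1 * X ^ 5 * wb ^ 2 + 14 * X ^ 5 * Y + -4 * X ^ 5 * Y * wb + 10 * X ^ 8 + 3 * X ^ 8 * wb + -1 * X ^ 8 * wb ^ 2 + 2 * X ^ 8 * Y + -4 * X ^ 8 * Y * wb + 16 * X ^ 11 + -4 * X ^ 11 * wb + -12 * X ^ 11 * Y + -6 * X ^ 14 + X ^ 17 + -2 * yb * X ^ 5 + -2 * yb * X ^ 8 + -9 * xb * X + 7 * xb * X * wb + -1 * xb * X * wb ^ 2 + 14 * xb * X * Y + -4 * xb * X * Y * wb + 10 * xb * X ^ 4 + 3 * xb * X ^ 4 * wb + -1 * xb * X ^ 4 * wb ^ 2 + 2 * xb * X ^ 4 * Y + -4 * xb * X ^ 4 * Y * wb + 16 * xb * X ^ 7 + -4 * xb * X ^ 7 * wb + -12 * xb * X ^ 7 * Y + -6 * xb * X ^ 10 + -2 * xb * X ^ 13 + xb * X ^ 16 + -2 * xb * yb * X + -2 * xb * yb * X ^ 4 + xb ^ 2 + -2 * xb ^ 2 * X ^ 9 + -2 * xb ^ 2 * X ^ 12) * hwb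

/-- let `F₄ = F₂(w)` be a field with four elements, where
`w² + w + 1 = 0`.  For every `n ≥ 1`, with `X = x^{4^n}` and `Y = y^{4^n}` in
`B = F₄[x,y]/(y² + y + x³ + w)`,
`((X+x)(Y⁴+y⁴) + (X⁴+x⁴)(x²X + x³ + 1) + X + x)·(X¹⁶ + x)
  = ((Y⁴+y)(X⁴+X) + X¹³ + xX¹² + xX⁹ + x)·(x²X⁸ + (X⁴+x)(Y⁴+y) + X⁴)`. -/
theorem statement18 (F : Type) [Field F] [Fintype F] (hF : Fintype.card F = 4)
    (w : F) (hw : w ^ 2 + w + 1 = 0) (n : ℕ) (hn : 1 ≤ n) :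
    ∀ X Y : Bthree F w, X = xB F w ^ 4 ^ n → Y = yB F w ^ 4 ^ n →
      ((X + xB F w) * (Y ^ 4 + yB F w ^ 4) +
            (X ^ 4 + xB F w ^ 4) * (xB F w ^ 2 * X + xB F w ^ 3 + 1) + X + xB F w) *
          (X ^ 16 + xB F w) =
        ((Y ^ 4 + yB F w) * (X ^ 4 + X) + X ^ 13 + xB F w * X ^ 12 + xB F w * X ^ 9 +
            xB F w) *
          (xB F w ^ 2 * X ^ 8 + (X ^ 4 + xB F w) * (Y ^ 4 + yB F w) + X ^ 4) := by
  intro X Y hXd hYd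
  have h4F : ((4 : ℕ) : F) = 0 := by
    rw [← hF]; exact FiniteField.cast_card_eq_zero F
  have h2F : (2 : F) = 0 := by
    have h' : ((4 : ℕ) : F) = (2 : F) * 2 := by norm_num
    exact mul_self_eq_zero.mp (by rw [← h', h4F])
  refine statement18_aux (xB F w) (yB F w) (phiB F w w) ?_ ?_ ?_ n X Y hXd hYd
  · have h' : (2 : Bthree F w) = phiB F w (2 : F) := (map_ofNat (phiB F w) 2).symm
    rw [h', h2F, map_zero]
  · have h := congrArg (phiB F w) hw
    simpa using h
  · have hmem : (Polynomial.X ^ 2 + Polynomial.X +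
        Polynomial.C (Polynomial.X ^ 3 + Polynomial.C w) : Polynomial (Polynomial F)) ∈
        Ideal.span {(Polynomial.X ^ 2 + Polynomial.X +
        Polynomial.C (Polynomial.X ^ 3 + Polynomial.C w) : Polynomial (Polynomial F))} :=
      Ideal.subset_span rfl
    have h0 := (Ideal.Quotient.eq_zero_iff_mem).mpr hmem
    have he : yB F w ^ 2 + yB F w + xB F w ^ 3 + phiB F w w =
        Ideal.Quotient.mk _ (Polynomial.X ^ 2 + Polynomial.X +
        Polynomial.C (Polynomial.X ^ 3 + Polynomial.C w) : Polynomial (Polynomial F)) := by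
      simp only [phiB, xB, yB, map_add, map_pow, RingHom.coe_comp, Function.comp_apply]
      ring
    rw [he, h0]
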